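/- Let L ⊆ Δ* be a language over a finite nonempty alphabet Δ. Suppose there exist words v ∈ Δ* and nonempty words x, w, y, z ∈ Δ⁺, and a language L' that is either L or its complement Δ* ∖ L, such that for all m ≥ 0 and n > 0: (v·xᵐ·w·yⁿ⁻¹·z ∉ L' and v·xᵐ·w·yⁿ·z ∈ L') if and only if m = n. Then L_# = {0ⁿ1ⁿ | n ≥ 1} is truth-table reducible by a Mealy machine to L, i.e., L_# ≤^A L. -/

import Mathlib

/-- A Mealy machine with oracle: finite state set `Q`, start state `q0`,
partial transition function `step`, output function `out`, and for each state `q`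
a tuple of `numSuf q` query suffixes `suf q` together with a truth table `tt q`. -/
structure OracleMealy (α : Type) (β : Type) where
  Q : Type
  [fintypeQ : Fintype Q]
  q0 : Q
  step : Q → α → Option Q
  out : Q → α → List β
  numSuf : Q → ℕ
  suf : (q : Q) → Fin (numSuf q) → List β
  tt : (q : Q) → (Fin (numSuf q) → Bool) → Bool

namespace OracleMealy

variable {α β : Type}

/-- Running the machine on input `w` from the start state, returning the final state
together with the string written on the oracle tape (`none` if a transition is undefined). -/
def run (M : OracleMealy α β) (w : List α) : Option (M.Q × List β) :=
  w.foldl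
    (fun s a => s.bind fun qo => (M.step qo.1 a).map fun q' => (q', qo.2 ++ M.out qo.1 a))
    (some (M.q0, []))

open Classical in
/-- The machine `M` with oracle `L` accepts `w` iff the run on `w` is defined, ending in a
state `p` with output `o`, and the truth table of `p` applied to the answers of the oracle
queries `o ++ M.suf p i ∈ L` yields `true`. -/
def Accepts (M : OracleMealy α β) (L : Set (List β)) (w : List α) : Prop :=
  ∃ p o, M.run w = some (p, o) ∧
    M.tt p (fun i => decide (o ++ M.suf p i ∈ L)) = true

end OracleMealy

/-- `L₁ ≤^A L₂`: truth-table reducibility by Mealy machines. -/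
def MealyTTReducible (L₁ : Set (List α)) (L₂ : Set (List β)) : Prop :=
  ∃ M : OracleMealy α β, ∀ w : List α, w ∈ L₁ ↔ M.Accepts L₂ w

/-- The language `L_# = {0^n 1^n | n ≥ 1}` over the alphabet `{0,1}` (`false` = 0, `true` = 1). -/
def Lsharp : Set (List Bool) :=
  {w | ∃ n : ℕ, 1 ≤ n ∧ w = List.replicate n false ++ List.replicate n true}

/-- `wpow x n` is the `n`-fold concatenation `xⁿ` of the word `x`. -/
def wpow {α : Type} (x : List α) (n : ℕ) : List α := (List.replicate n x).flatten

-- auxiliary definitions and lemmas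

inductive MSt | s0 | s1 | s2
deriving DecidableEq

instance : Fintype MSt := ⟨{.s0, .s1, .s2}, fun q => by cases q <;> simp⟩

lemma wpow_zero {α : Type} (x : List α) : wpow x 0 = [] := rfl
lemma wpow_succ {α : Type} (x : List α) (n : ℕ) : wpow x (n+1) = x ++ wpow x n := by
  simp [wpow, List.replicate_succ]
lemma wpow_succ' {α : Type} (x : List α) (n : ℕ) : wpow x (n+1) = wpow x n ++ x := by
  simp [wpow, List.replicate_succ']

variable {Δ : Type}

def mkM (v x w y z : List Δ) (c : Bool) : OracleMealy Bool Δ where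
  Q := MSt
  fintypeQ := inferInstance
  q0 := .s0
  step q a := match q, a with
    | .s0, false => some .s1
    | .s1, false => some .s1
    | .s1, true  => some .s2
    | .s2, true  => some .s2
    | _, _ => none
  out q a := match q, a with
    | .s0, false => v ++ x
    | .s1, false => x
    | .s1, true  => w
    | .s2, true  => y
    | _, _ => []
  numSuf q := match q with | .s2 => 2 | _ => 0
  suf q := match q with
    | .s0 => ![] | .s1 => ![] | .s2 => ![z, y ++ z]
  tt q := match q with
    | .s2 => fun b => (c && b 0 && !b 1) || (!c && !b 0 && b 1)
    | _ => fun _ => false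

section
variable (v x w y z : List Δ) (c : Bool)

def runFrom (q : MSt) (o : List Δ) (inp : List Bool) : Option (MSt × List Δ) :=
  inp.foldl
    (fun s a => s.bind fun qo => ((mkM v x w y z c).step qo.1 a).map
      fun q' => (q', qo.2 ++ (mkM v x w y z c).out qo.1 a))
    (some (q, o))

lemma run_eq_runFrom (inp : List Bool) :
    (mkM v x w y z c).run inp = runFrom v x w y z c .s0 [] inp := rfl

lemma runFrom_nil (q o) : runFrom v x w y z c q o [] = some (q, o) := rfl

lemma foldl_step_none (inp : List Bool) :
    inp.foldl
      (fun s a => s.bind fun qo => ((mkM v x w y z c).step qo.1 a).map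
        fun q' => (q', qo.2 ++ (mkM v x w y z c).out qo.1 a))
      (none : Option (MSt × List Δ)) = none := by
  induction inp with
  | nil => rfl
  | cons b l ih => simpa using ih

lemma runFrom_cons (q o a inp) : runFrom v x w y z c q o (a :: inp) =
    match (mkM v x w y z c).step q a with
    | none => none
    | some q' => runFrom v x w y z c q' (o ++ (mkM v x w y z c).out q a) inp := by
  cases hq : (mkM v x w y z c).step q a with
  | none =>
      simp only [runFrom, List.foldl_cons, Option.bind_some, hq, Option.map_none]
      exact foldl_step_none v x w y z c inp
  | some q' => simp [runFrom, hq]; rfl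

lemma runFrom_false (q o inp) : ∀ hq : q ≠ MSt.s2,
    runFrom v x w y z c q o (false :: inp) =
      runFrom v x w y z c .s1 (o ++ (if q = .s0 then v ++ x else x)) inp := by
  cases q <;> simp [runFrom_cons, mkM]

lemma runFrom_rep_false (m : ℕ) : ∀ o, runFrom v x w y z c .s1 o (List.replicate m false) =
    some (.s1, o ++ wpow x m) := by
  induction m with
  | zero => simp [runFrom_nil, wpow_zero]
  | succ n ih =>
      intro o
      rw [List.replicate_succ, runFrom_cons]
      simp only [mkM]
      rw [ih, wpow_succ]
      simp
lemma runFrom_rep_true (m : ℕ) : ∀ o, runFrom v x w y z c .s2 o (List.replicate m true) =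
    some (.s2, o ++ wpow y m) := by
  induction m with
  | zero => simp [runFrom_nil, wpow_zero]
  | succ n ih =>
      intro o
      rw [List.replicate_succ, runFrom_cons]
      simp only [mkM]
      rw [ih, wpow_succ]
      simp

end

section
variable (v x w y z : List Δ) (c : Bool)

lemma runFrom_append (q o l1 l2) :
    runFrom v x w y z c q o (l1 ++ l2) =
      match runFrom v x w y z c q o l1 with
      | none => none
      | some qo => runFrom v x w y z c qo.1 qo.2 l2 := by
  induction l1 generalizing q o with
  | nil => simp [runFrom_nil]
  | cons a l ih =>
      rw [List.cons_append, runFrom_cons, runFrom_cons]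
      cases (mkM v x w y z c).step q a with
      | none => rfl
      | some q' => simpa using ih q' _

lemma runFrom_concat (q o l a) :
    runFrom v x w y z c q o (l ++ [a]) =
      match runFrom v x w y z c q o l with
      | none => none
      | some qo =>
          match (mkM v x w y z c).step qo.1 a with
          | none => none
          | some q' => some (q', qo.2 ++ (mkM v x w y z c).out qo.1 a) := by
  rw [runFrom_append]
  cases runFrom v x w y z c q o l with
  | none => rfl
  | some qo =>
      simp only []
      rw [runFrom_cons]
      cases (mkM v x w y z c).step qo.1 a <;> simp [runFrom_nil] <;> rfl

lemma runClass (inp : List Bool) :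
    runFrom v x w y z c .s0 [] inp = none ∨
    (inp = [] ∧ runFrom v x w y z c .s0 [] inp = some (.s0, [])) ∨
    (∃ m, 1 ≤ m ∧ inp = List.replicate m false ∧
      runFrom v x w y z c .s0 [] inp = some (.s1, v ++ wpow x m)) ∨
    (∃ m n, 1 ≤ m ∧ 1 ≤ n ∧ inp = List.replicate m false ++ List.replicate n true ∧
      runFrom v x w y z c .s0 [] inp = some (.s2, v ++ wpow x m ++ w ++ wpow y (n-1))) := by
  induction inp using List.reverseRecOn with
  | nil => exact Or.inr (Or.inl ⟨rfl, rfl⟩)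
  | append_singleton l a ih =>
      rw [runFrom_concat]
      rcases ih with h1 | ⟨he, h2⟩ | ⟨m, hm, he, h3⟩ | ⟨m, n, hm, hn, he, h4⟩
      · rw [h1]; exact Or.inl rfl
      · rw [h2]
        cases a with
        | false =>
            refine Or.inr (Or.inr (Or.inl ⟨1, le_refl 1, ?_, ?_⟩)) <;>
              simp [he, mkM, wpow]
        | true => subst he; simp [mkM]
      · rw [h3]
        cases a with
        | false =>
            refine Or.inr (Or.inr (Or.inl ⟨m + 1, by omega, ?_, ?_⟩))
            · rw [he, List.replicate_succ']
            · simp [mkM, wpow_succ']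
        | true =>
            refine Or.inr (Or.inr (Or.inr ⟨m, 1, hm, le_refl 1, ?_, ?_⟩))
            · simp [he]
            · simp [mkM, wpow]
      · rw [h4]
        cases a with
        | false => simp [mkM]
        | true =>
            refine Or.inr (Or.inr (Or.inr ⟨m, n + 1, hm, by omega, ?_, ?_⟩))
            · rw [he, List.append_assoc, ← List.replicate_succ']
            · obtain ⟨j, rfl⟩ : ∃ j, n = j + 1 := ⟨n - 1, by omega⟩
              simp [mkM, wpow_succ']

lemma run_block (k j : ℕ) :
    runFrom v x w y z c .s0 [] (List.replicate (k+1) false ++ List.replicate (j+1) true) =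
      some (.s2, v ++ wpow x (k+1) ++ w ++ wpow y j) := by
  rw [runFrom_append, List.replicate_succ, runFrom_cons]
  simp only [mkM]
  rw [runFrom_rep_false]
  simp only []
  rw [List.replicate_succ, runFrom_cons]
  simp only [mkM]
  rw [runFrom_rep_true]
  simp [wpow_succ, List.append_assoc]

open Classical in
lemma tt_iff (L L' : Set (List Δ)) (hc : ∀ u : List Δ, u ∈ L' ↔ cond c (u ∉ L) (u ∈ L))
    (o : List Δ) :
    ((mkM v x w y z c).tt .s2 (fun i => decide (o ++ (mkM v x w y z c).suf .s2 i ∈ L)) = true)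
      ↔ (o ++ z ∉ L' ∧ o ++ (y ++ z) ∈ L') := by
  cases c <;> simp [mkM, hc] <;> by_cases h1 : o ++ z ∈ L <;> simp [h1]

end

/-- If there are words `v` and nonempty words `x, w, y, z` over `Δ` and a language
`L' ∈ {L, Lᶜ}` such that for all `m ≥ 0` and `n > 0`,
`(v xᵐ w yⁿ⁻¹ z ∉ L' and v xᵐ w yⁿ z ∈ L') ↔ m = n`, then `L_# ≤^A L`. -/
theorem Lsharp_mealyTTReducible_of_witness
    {Δ : Type} [Fintype Δ] [Nonempty Δ] (L : Set (List Δ))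
    (v x w y z : List Δ) (hx : x ≠ []) (hw : w ≠ []) (hy : y ≠ []) (hz : z ≠ [])
    (L' : Set (List Δ)) (hL' : L' = L ∨ L' = Lᶜ)
    (h : ∀ m n : ℕ, 1 ≤ n →
      ((v ++ wpow x m ++ w ++ wpow y (n - 1) ++ z ∉ L' ∧
        v ++ wpow x m ++ w ++ wpow y n ++ z ∈ L') ↔ m = n)) :
    MealyTTReducible Lsharp L := by
  obtain ⟨c, hc⟩ : ∃ c : Bool, ∀ u : List Δ, u ∈ L' ↔ cond c (u ∉ L) (u ∈ L) := by
    rcases hL' with rfl | rfl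
    · exact ⟨false, fun u => Iff.rfl⟩
    · exact ⟨true, fun u => Iff.rfl⟩
  refine ⟨mkM v x w y z c, fun inp => ?_⟩
  constructor
  · rintro ⟨n, hn, rfl⟩
    obtain ⟨k, rfl⟩ : ∃ k, n = k + 1 := ⟨n - 1, by omega⟩
    refine ⟨.s2, v ++ wpow x (k+1) ++ w ++ wpow y k, ?_, ?_⟩
    · rw [run_eq_runFrom, run_block]; rfl
    · rw [tt_iff v x w y z c L L' hc]
      have := (h (k+1) (k+1) (by omega)).mpr rfl
      simp only [Nat.add_sub_cancel] at this
      constructor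
      · simpa [List.append_assoc] using this.1
      · have h2 := this.2
        rw [wpow_succ' y k] at h2
        simpa [List.append_assoc] using h2
  · rintro ⟨p, o, hr, htt⟩
    rw [run_eq_runFrom] at hr
    rcases runClass v x w y z c inp with h1 | ⟨he, h2⟩ | ⟨m, hm, he, h3⟩ |
        ⟨m, n, hm, hn, he, h4⟩
    · rw [h1] at hr; exact absurd hr (by simp)
    · rw [h2] at hr
      replace hr := Prod.mk.inj (Option.some.inj hr)
      obtain ⟨rfl, rfl⟩ := hr
      simp [mkM] at htt
    · rw [h3] at hr
      replace hr := Prod.mk.inj (Option.some.inj hr)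
      obtain ⟨rfl, rfl⟩ := hr
      simp [mkM] at htt
    · rw [h4] at hr
      replace hr := Prod.mk.inj (Option.some.inj hr)
      obtain ⟨rfl, rfl⟩ := hr
      rw [tt_iff v x w y z c L L' hc] at htt
      have hmn : m = n := by
        refine (h m n hn).mp ⟨?_, ?_⟩
        · simpa [List.append_assoc] using htt.1
        · obtain ⟨j, rfl⟩ : ∃ j, n = j + 1 := ⟨n - 1, by omega⟩
          have h2 := htt.2
          simp only [Nat.add_sub_cancel] at h2 ⊢
          rw [wpow_succ' y j]
          simpa [List.append_assoc] using h2
      subst hmn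
      exact ⟨m, hm, he⟩
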